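/- Let P : Dom(P) ⊆ H₁ → H₂ be Fredholm and let Q : Dom(Q) ⊆ H₁ → H be defined by the same formula with H₂ continuously and densely embedded in H, where Dom(Q) ⊇ Dom(P), ker Q = ker P, Q is Fredholm, and R(Q) ∩ H₂ = R(P). Then codim_{H₂} R(P) = codim_H R(Q), and hence ind P = ind Q. -/

import Mathlib

open Module

def IsFredholmPMap {H₁ H₂ : Type*}
    [NormedAddCommGroup H₁] [InnerProductSpace ℂ H₁] [CompleteSpace H₁]
    [NormedAddCommGroup H₂] [InnerProductSpace ℂ H₂] [CompleteSpace H₂]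
    (P : H₁ →ₗ.[ℂ] H₂) : Prop :=
  IsClosed (P.graph : Set (H₁ × H₂)) ∧
  IsClosed ((LinearMap.range P.toFun : Submodule ℂ H₂) : Set H₂) ∧
  FiniteDimensional ℂ (LinearMap.ker P.toFun) ∧
  FiniteDimensional ℂ (H₂ ⧸ LinearMap.range P.toFun)

noncomputable def indPMap {H₁ H₂ : Type*}
    [NormedAddCommGroup H₁] [InnerProductSpace ℂ H₁] [CompleteSpace H₁]
    [NormedAddCommGroup H₂] [InnerProductSpace ℂ H₂] [CompleteSpace H₂]
    (P : H₁ →ₗ.[ℂ] H₂) : ℤ :=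
  (finrank ℂ (LinearMap.ker P.toFun) : ℤ) - (finrank ℂ (H₂ ⧸ LinearMap.range P.toFun) : ℤ)

/-- if `Q` is given by the same formula as `P` but viewed into a larger
space `H ⊇ H₂` (dense continuous embedding `ι`), `ker Q = ker P`, both are Fredholm,
and `R(Q) ∩ H₂ = R(P)`, then `codim_{H₂} R(P) = codim_H R(Q)` and `ind P = ind Q`. -/
theorem stmt_8
    {H₁ H₂ H : Type*}
    [NormedAddCommGroup H₁] [InnerProductSpace ℂ H₁] [CompleteSpace H₁]
    [NormedAddCommGroup H₂] [InnerProductSpace ℂ H₂] [CompleteSpace H₂]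
    [NormedAddCommGroup H] [InnerProductSpace ℂ H] [CompleteSpace H]
    (ι : H₂ →L[ℂ] H) (hinj : Function.Injective ι) (hdense : DenseRange ι)
    (P : H₁ →ₗ.[ℂ] H₂) (Q : H₁ →ₗ.[ℂ] H)
    (hPF : IsFredholmPMap P) (hQF : IsFredholmPMap Q)
    (hdom : P.domain ≤ Q.domain)
    (hagree : ∀ x : P.domain, Q (Submodule.inclusion hdom x) = ι (P x))
    (hker : Submodule.map P.domain.subtype (LinearMap.ker P.toFun) =
      Submodule.map Q.domain.subtype (LinearMap.ker Q.toFun))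
    (hrange : ∀ f : H₂, ι f ∈ LinearMap.range Q.toFun ↔ f ∈ LinearMap.range P.toFun) :
    finrank ℂ (H₂ ⧸ LinearMap.range P.toFun) =
      finrank ℂ (H ⧸ LinearMap.range Q.toFun) ∧
    indPMap P = indPMap Q := by
  haveI hclosed : IsClosed ((LinearMap.range Q.toFun : Submodule ℂ H) : Set H) := hQF.2.1
  haveI : FiniteDimensional ℂ (H ⧸ LinearMap.range Q.toFun) := hQF.2.2.2
  -- the map H₂ → H ⧸ R(Q)
  set RQ := LinearMap.range Q.toFun
  set RP := LinearMap.range P.toFun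
  set L : H₂ →ₗ[ℂ] (H ⧸ RQ) := RQ.mkQ.comp ι.toLinearMap with hL
  have hkerL : LinearMap.ker L = RP := by
    ext x
    simp only [hL, LinearMap.mem_ker, LinearMap.comp_apply, ContinuousLinearMap.coe_coe,
      Submodule.mkQ_apply, Submodule.Quotient.mk_eq_zero]
    exact hrange x
  have hle : RP ≤ LinearMap.ker L := le_of_eq hkerL.symm
  set e : (H₂ ⧸ RP) →ₗ[ℂ] (H ⧸ RQ) := RP.liftQ L hle with he
  have hinj' : Function.Injective e := by
    rw [← LinearMap.ker_eq_bot, he, Submodule.ker_liftQ_eq_bot _ _ _ (le_of_eq hkerL)]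
  -- surjectivity: range L is dense and closed
  have hcontL : Continuous L := ((RQ.isOpenQuotientMap_mkQ).continuous).comp ι.continuous
  have hdenseL : DenseRange (L : H₂ → H ⧸ RQ) := by
    have h1 : DenseRange (RQ.mkQ : H → H ⧸ RQ) := RQ.mkQ_surjective.denseRange
    exact h1.comp hdense ((RQ.isOpenQuotientMap_mkQ).continuous)
  have hclosedL : IsClosed ((LinearMap.range L : Submodule ℂ (H ⧸ RQ)) : Set (H ⧸ RQ)) :=
    (LinearMap.range L).closed_of_finiteDimensional
  have hrangeL : LinearMap.range L = ⊤ := by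
    rw [Submodule.eq_top_iff']
    intro y
    have : Dense ((LinearMap.range L : Submodule ℂ (H ⧸ RQ)) : Set (H ⧸ RQ)) := by
      exact hdenseL
    have := hclosedL.closure_eq ▸ this.closure_eq
    exact (Set.eq_univ_iff_forall.mp this) y
  have hsurj : Function.Surjective e := by
    rw [← LinearMap.range_eq_top, he, Submodule.range_liftQ, hrangeL]
  let E : (H₂ ⧸ RP) ≃ₗ[ℂ] (H ⧸ RQ) := LinearEquiv.ofBijective e ⟨hinj', hsurj⟩
  have hcodim : finrank ℂ (H₂ ⧸ RP) = finrank ℂ (H ⧸ RQ) := E.finrank_eq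
  refine ⟨hcodim, ?_⟩
  -- kernels
  have hkdim : finrank ℂ (LinearMap.ker P.toFun) = finrank ℂ (LinearMap.ker Q.toFun) := by
    have e1 := Submodule.equivMapOfInjective P.domain.subtype
      P.domain.injective_subtype (LinearMap.ker P.toFun)
    have e2 := Submodule.equivMapOfInjective Q.domain.subtype
      Q.domain.injective_subtype (LinearMap.ker Q.toFun)
    calc finrank ℂ (LinearMap.ker P.toFun)
        = finrank ℂ (Submodule.map P.domain.subtype (LinearMap.ker P.toFun)) := e1.finrank_eq
      _ = finrank ℂ (Submodule.map Q.domain.subtype (LinearMap.ker Q.toFun)) := by rw [hker]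
      _ = finrank ℂ (LinearMap.ker Q.toFun) := e2.finrank_eq.symm
  unfold indPMap
  rw [hkdim, hcodim]
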